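/- As f → +∞, the effective drag coefficient satisfies ζ(f) = 1 + (1/f²)·∫₀¹ (φ'(x))² dx + O(1/f³); that is, ζ(f) − 1 − (1/f²)·∫₀¹ (φ'(x))² dx is O(f⁻³) as f → +∞. -/

import Mathlib

open MeasureTheory intervalIntegral Asymptotics Filter

noncomputable def w0 (φ : ℝ → ℝ) (f x : ℝ) : ℝ :=
  ∫ s in (0:ℝ)..1, Real.exp (φ (x + s) - φ x - f * s)

noncomputable def M0 (φ : ℝ → ℝ) (f : ℝ) : ℝ := ∫ x in (0:ℝ)..1, w0 φ f x

noncomputable def w1 (φ : ℝ → ℝ) (f x : ℝ) : ℝ :=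
  ∫ s in (0:ℝ)..1, (w0 φ f (x + s)) ^ 2 * Real.exp (φ (x + s) - φ x - f * s)

noncomputable def M1 (φ : ℝ → ℝ) (f : ℝ) : ℝ := ∫ x in (0:ℝ)..1, w1 φ f x



lemma L_deriv_per {g : ℝ → ℝ} (hg : ∀ x, g (x + 1) = g x) (x : ℝ) :
    deriv g (x + 1) = deriv g x := by
  have h : deriv (fun t => g (t + 1)) x = deriv g (x + 1) := deriv_comp_add_const g 1 x
  rw [← h]
  congr 1
  exact funext hg

lemma L_ibp (f : ℝ) (hf : 0 < f) (u u' : ℝ → ℝ)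
    (hu : ∀ t, HasDerivAt u (u' t) t) (hu' : Continuous u') :
    ∫ s in (0:ℝ)..1, u s * Real.exp (-(f * s)) =
      (u 0 - u 1 * Real.exp (-f)) / f
        + (1 / f) * ∫ s in (0:ℝ)..1, u' s * Real.exp (-(f * s)) := by
  have hv : ∀ t : ℝ, HasDerivAt (fun s => -(1/f) * Real.exp (-(f * s)))
      (Real.exp (-(f * t))) t := by
    intro t
    have h1 : HasDerivAt (fun s : ℝ => -(f * s)) (-f) t := by
      have h0 : HasDerivAt (fun s : ℝ => f * s) f t := by
        simpa using (hasDerivAt_id t).const_mul f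
      exact h0.neg
    have h2 := h1.exp.const_mul (-(1/f))
    refine h2.congr_deriv ?_
    field_simp [hf.ne']
  have key := intervalIntegral.integral_mul_deriv_eq_deriv_mul
    (u := u) (v := fun s => -(1/f) * Real.exp (-(f * s))) (u' := u')
    (v' := fun s => Real.exp (-(f * s)))
    (fun t _ => hu t) (fun t _ => hv t)
    (hu'.intervalIntegrable 0 1)
    ((Real.continuous_exp.comp (by fun_prop : Continuous fun s : ℝ => -(f*s))).intervalIntegrable 0 1)
  rw [key]
  have h3 : ∫ s in (0:ℝ)..1, u' s * (-(1/f) * Real.exp (-(f*s)))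
      = -(1/f) * ∫ s in (0:ℝ)..1, u' s * Real.exp (-(f*s)) := by
    rw [← intervalIntegral.integral_const_mul]
    congr 1
    ext s
    ring
  rw [h3]
  rw [show f * (1:ℝ) = f from mul_one f, show f * (0:ℝ) = 0 from mul_zero f, neg_zero,
    Real.exp_zero]
  field_simp
  ring

lemma L_exp_int (f : ℝ) (hf : 0 < f) :
    ∫ s in (0:ℝ)..1, Real.exp (-(f * s)) = (1 - Real.exp (-f)) / f := by
  have h : ∀ s : ℝ, -(f * s) = (-f) * s := by intro s; ring
  simp_rw [h]
  rw [intervalIntegral.integral_comp_mul_left (fun x => Real.exp x) (by linarith : (-f) ≠ 0)]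
  rw [integral_exp]
  rw [mul_one, mul_zero, Real.exp_zero, smul_eq_mul]
  field_simp
  ring

lemma L_bound (f B : ℝ) (hf : 0 < f) (g : ℝ → ℝ) (hgc : Continuous g)
    (hgb : ∀ s ∈ Set.Icc (0:ℝ) 1, |g s| ≤ B) :
    |∫ s in (0:ℝ)..1, g s * Real.exp (-(f * s))| ≤ B / f := by
  have hB : 0 ≤ B := le_trans (abs_nonneg _) (hgb 0 ⟨le_refl 0, zero_le_one⟩)
  have h1 : ‖∫ s in (0:ℝ)..1, g s * Real.exp (-(f * s))‖
      ≤ |∫ s in (0:ℝ)..1, B * Real.exp (-(f * s))| := by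
    refine (intervalIntegral.norm_integral_le_of_norm_le zero_le_one ?_ ?_).trans (le_abs_self _)
    · filter_upwards with t ht
      rw [Real.norm_eq_abs, abs_mul, abs_of_pos (Real.exp_pos _)]
      exact mul_le_mul_of_nonneg_right (hgb t ⟨le_of_lt ht.1, ht.2⟩) (Real.exp_pos _).le
    · exact ((continuous_const.mul (Real.continuous_exp.comp
        (by fun_prop : Continuous fun s : ℝ => -(f*s)))).intervalIntegrable 0 1)
  rw [Real.norm_eq_abs] at h1
  refine h1.trans ?_
  rw [intervalIntegral.integral_const_mul, L_exp_int f hf]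
  have he : 0 ≤ 1 - Real.exp (-f) := by
    have := Real.exp_le_one_iff.mpr (by linarith : -f ≤ 0)
    linarith
  rw [abs_of_nonneg (by positivity)]
  have : B * (1 - Real.exp (-f)) ≤ B :=
    mul_le_of_le_one_right hB (by nlinarith [Real.exp_pos (-f)])
  rw [← mul_div_assoc]
  exact (div_le_div_iff_of_pos_right hf).mpr this

lemma L_w0_eq (φ : ℝ → ℝ) (f x : ℝ) :
    w0 φ f x = Real.exp (f * x - φ x) * ∫ u in x..(x+1), Real.exp (φ u - f * u) := by
  rw [w0]
  have h : ∀ s : ℝ, Real.exp (φ (x + s) - φ x - f * s)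
      = Real.exp (f * x - φ x) * Real.exp (φ (x + s) - f * (x + s)) := by
    intro s
    rw [← Real.exp_add]
    ring_nf
  simp_rw [h]
  rw [intervalIntegral.integral_const_mul]
  congr 1
  have := intervalIntegral.integral_comp_add_left
    (a := (0:ℝ)) (b := 1) (fun u => Real.exp (φ u - f * u)) x
  simpa using this

lemma L_w0_cont (φ : ℝ → ℝ) (hφc : Continuous φ) (f : ℝ) :
    Continuous (fun x => w0 φ f x) := by
  have hF : Continuous fun u => Real.exp (φ u - f * u) := by fun_prop
  have hP : Continuous fun t => ∫ u in (0:ℝ)..t, Real.exp (φ u - f * u) :=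
    intervalIntegral.continuous_primitive (fun a b => hF.intervalIntegrable a b) 0
  have heq : (fun x => w0 φ f x) = fun x => Real.exp (f * x - φ x) *
      ((∫ u in (0:ℝ)..(x+1), Real.exp (φ u - f * u))
        - ∫ u in (0:ℝ)..x, Real.exp (φ u - f * u)) := by
    funext x
    rw [L_w0_eq φ f x]
    congr 1
    rw [intervalIntegral.integral_interval_sub_left (hF.intervalIntegrable 0 (x+1))
      (hF.intervalIntegrable 0 x)]
  rw [heq]
  exact (Real.continuous_exp.comp (by fun_prop)).mul
    ((hP.comp (by fun_prop)).sub hP)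

lemma L_expand (φ : ℝ → ℝ) (hφ : ContDiff ℝ 3 φ) (hφper : ∀ x, φ (x + 1) = φ x) :
    ∃ B : ℝ, 0 ≤ B ∧ ∀ f : ℝ, 0 < f → ∀ x ∈ Set.Icc (0:ℝ) 1,
      |w0 φ f x - ((1 - Real.exp (-f)) / f
        + deriv φ x * ((1 - Real.exp (-f)) / f ^ 2)
        + (deriv (deriv φ) x + (deriv φ x) ^ 2) * ((1 - Real.exp (-f)) / f ^ 3))|
        ≤ B / f ^ 4 := by
  set ψ1 := deriv φ with hψ1def
  set ψ2 := deriv ψ1 with hψ2def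
  set ψ3 := deriv ψ2 with hψ3def
  have hd0 : Differentiable ℝ φ := hφ.differentiable (by norm_num)
  have hφ' : ContDiff ℝ 2 ψ1 :=
    (contDiff_succ_iff_deriv.mp (show ContDiff ℝ (2 + 1) φ by exact_mod_cast hφ)).2.2
  have hd1 : Differentiable ℝ ψ1 := hφ'.differentiable (by norm_num)
  have hφ'' : ContDiff ℝ 1 ψ2 :=
    (contDiff_succ_iff_deriv.mp (show ContDiff ℝ (1 + 1) ψ1 by exact_mod_cast hφ')).2.2
  have hd2 : Differentiable ℝ ψ2 := hφ''.differentiable (by norm_num)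
  have hcψ3 : Continuous ψ3 := (contDiff_one_iff_deriv.mp hφ'').2
  have hcφ : Continuous φ := hd0.continuous
  have hcψ1 : Continuous ψ1 := hd1.continuous
  have hcψ2 : Continuous ψ2 := hd2.continuous
  have hp1 : ∀ y, ψ1 (y + 1) = ψ1 y := fun y => L_deriv_per hφper y
  have hp2 : ∀ y, ψ2 (y + 1) = ψ2 y := fun y => L_deriv_per hp1 y
  obtain ⟨C0, hC0⟩ := (isCompact_Icc (a := (0:ℝ)) (b := 2)).exists_bound_of_continuousOn
    hcφ.continuousOn
  obtain ⟨C1, hC1⟩ := (isCompact_Icc (a := (0:ℝ)) (b := 2)).exists_bound_of_continuousOn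
    hcψ1.continuousOn
  obtain ⟨C2, hC2⟩ := (isCompact_Icc (a := (0:ℝ)) (b := 2)).exists_bound_of_continuousOn
    hcψ2.continuousOn
  obtain ⟨C3, hC3⟩ := (isCompact_Icc (a := (0:ℝ)) (b := 2)).exists_bound_of_continuousOn
    hcψ3.continuousOn
  have hC0n : 0 ≤ C0 := le_trans (norm_nonneg _) (hC0 0 ⟨le_refl 0, by norm_num⟩)
  have hC1n : 0 ≤ C1 := le_trans (norm_nonneg _) (hC1 0 ⟨le_refl 0, by norm_num⟩)
  have hC2n : 0 ≤ C2 := le_trans (norm_nonneg _) (hC2 0 ⟨le_refl 0, by norm_num⟩)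
  have hC3n : 0 ≤ C3 := le_trans (norm_nonneg _) (hC3 0 ⟨le_refl 0, by norm_num⟩)
  refine ⟨(C3 + 3 * C1 * C2 + C1 ^ 3) * Real.exp (2 * C0), by positivity, ?_⟩
  intro f hf x hx
  -- derivative chains
  have hin : ∀ t : ℝ, HasDerivAt (fun s : ℝ => φ (x + s) - φ x) (ψ1 (x + t)) t := by
    intro t
    have h1 : HasDerivAt (fun s : ℝ => x + s) 1 t := by
      simpa using (hasDerivAt_id t).const_add x
    have h2 := ((hd0 (x + t)).hasDerivAt.comp t h1)
    simpa using h2.sub_const (φ x)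
  have hu0 : ∀ t : ℝ, HasDerivAt (fun s => Real.exp (φ (x + s) - φ x))
      (ψ1 (x + t) * Real.exp (φ (x + t) - φ x)) t := by
    intro t
    have := (hin t).exp
    convert this using 1
    ring
  have hψ1c : ∀ t : ℝ, HasDerivAt (fun s : ℝ => ψ1 (x + s)) (ψ2 (x + t)) t := by
    intro t
    have h1 : HasDerivAt (fun s : ℝ => x + s) 1 t := by
      simpa using (hasDerivAt_id t).const_add x
    have h2 := (hd1 (x + t)).hasDerivAt.comp t h1
    rw [mul_one] at h2
    exact h2
  have hψ2c : ∀ t : ℝ, HasDerivAt (fun s : ℝ => ψ2 (x + s)) (ψ3 (x + t)) t := by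
    intro t
    have h1 : HasDerivAt (fun s : ℝ => x + s) 1 t := by
      simpa using (hasDerivAt_id t).const_add x
    have h2 := (hd2 (x + t)).hasDerivAt.comp t h1
    rw [mul_one] at h2
    exact h2
  have hu1 : ∀ t : ℝ, HasDerivAt (fun s => ψ1 (x + s) * Real.exp (φ (x + s) - φ x))
      ((ψ2 (x + t) + ψ1 (x + t) ^ 2) * Real.exp (φ (x + t) - φ x)) t := by
    intro t
    have := (hψ1c t).mul (hu0 t)
    refine this.congr_deriv ?_
    ring
  have hu2 : ∀ t : ℝ, HasDerivAt
      (fun s => (ψ2 (x + s) + ψ1 (x + s) ^ 2) * Real.exp (φ (x + s) - φ x))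
      ((ψ3 (x + t) + 3 * ψ1 (x + t) * ψ2 (x + t) + ψ1 (x + t) ^ 3)
        * Real.exp (φ (x + t) - φ x)) t := by
    intro t
    have hsq := ((hψ2c t).add ((hψ1c t).pow 2)).mul (hu0 t)
    refine hsq.congr_deriv ?_
    simp only [Pi.add_apply, Pi.pow_apply]
    ring
  -- continuity of integrands
  have hcu1 : Continuous fun s => ψ1 (x + s) * Real.exp (φ (x + s) - φ x) := by fun_prop
  have hcu2 : Continuous fun s =>
      (ψ2 (x + s) + ψ1 (x + s) ^ 2) * Real.exp (φ (x + s) - φ x) := by fun_prop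
  have hcu3 : Continuous fun s =>
      (ψ3 (x + s) + 3 * ψ1 (x + s) * ψ2 (x + s) + ψ1 (x + s) ^ 3)
        * Real.exp (φ (x + s) - φ x) := by fun_prop
  -- IBP three times
  have hw : w0 φ f x
      = ∫ s in (0:ℝ)..1, (fun s => Real.exp (φ (x + s) - φ x)) s * Real.exp (-(f * s)) := by
    rw [w0]
    congr 1
    ext s
    rw [← Real.exp_add]
    ring_nf
  have E1 := L_ibp f hf _ _ hu0 hcu1
  have E2 := L_ibp f hf _ _ hu1 hcu2
  have E3 := L_ibp f hf _ _ hu2 hcu3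
  simp only [] at E1 E2 E3 hw
  -- endpoint values
  have v00 : Real.exp (φ (x + 0) - φ x) = 1 := by simp
  have v01 : Real.exp (φ (x + 1) - φ x) = 1 := by rw [hφper]; simp
  set I3 : ℝ := ∫ s in (0:ℝ)..1,
    (ψ3 (x + s) + 3 * ψ1 (x + s) * ψ2 (x + s) + ψ1 (x + s) ^ 3)
      * Real.exp (φ (x + s) - φ x) * Real.exp (-(f * s)) with hI3def
  have hbound : |I3| ≤ ((C3 + 3 * C1 * C2 + C1 ^ 3) * Real.exp (2 * C0)) / f := by
    apply L_bound f _ hf _ (by fun_prop)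
    intro s hs
    have hxs : x + s ∈ Set.Icc (0:ℝ) 2 := by
      constructor <;> [linarith [hx.1, hs.1]; linarith [hx.2, hs.2]]
    have b1 : |ψ1 (x + s)| ≤ C1 := by
      have := hC1 _ hxs; rwa [Real.norm_eq_abs] at this
    have b2 : |ψ2 (x + s)| ≤ C2 := by
      have := hC2 _ hxs; rwa [Real.norm_eq_abs] at this
    have b3 : |ψ3 (x + s)| ≤ C3 := by
      have := hC3 _ hxs; rwa [Real.norm_eq_abs] at this
    have b0 : Real.exp (φ (x + s) - φ x) ≤ Real.exp (2 * C0) := by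
      apply Real.exp_le_exp.mpr
      have hx2 : x ∈ Set.Icc (0:ℝ) 2 := ⟨hx.1, by linarith [hx.2]⟩
      have e1 := hC0 _ hxs
      have e2 := hC0 _ hx2
      rw [Real.norm_eq_abs] at e1 e2
      have := abs_le.mp e1
      have := abs_le.mp e2
      linarith [(abs_le.mp e1).2, (abs_le.mp e2).1]
    rw [abs_mul]
    have htri : |ψ3 (x + s) + 3 * ψ1 (x + s) * ψ2 (x + s) + ψ1 (x + s) ^ 3|
        ≤ C3 + 3 * C1 * C2 + C1 ^ 3 := by
      have t1 : |3 * ψ1 (x + s) * ψ2 (x + s)| ≤ 3 * C1 * C2 := by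
        rw [abs_mul, abs_mul, abs_of_nonneg (by norm_num : (0:ℝ) ≤ 3)]
        have := mul_le_mul b1 b2 (abs_nonneg _) hC1n
        nlinarith [abs_nonneg (ψ1 (x+s)), abs_nonneg (ψ2 (x+s))]
      have t2 : |ψ1 (x + s) ^ 3| ≤ C1 ^ 3 := by
        rw [abs_pow]
        exact pow_le_pow_left₀ (abs_nonneg _) b1 3
      calc |ψ3 (x + s) + 3 * ψ1 (x + s) * ψ2 (x + s) + ψ1 (x + s) ^ 3|
          ≤ |ψ3 (x + s) + 3 * ψ1 (x + s) * ψ2 (x + s)| + |ψ1 (x + s) ^ 3| := abs_add_le _ _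
        _ ≤ (|ψ3 (x + s)| + |3 * ψ1 (x + s) * ψ2 (x + s)|) + |ψ1 (x + s) ^ 3| := by
            gcongr; exact abs_add_le _ _
        _ ≤ C3 + 3 * C1 * C2 + C1 ^ 3 := by linarith
    rw [abs_of_pos (Real.exp_pos _)]
    exact mul_le_mul htri b0 (Real.exp_pos _).le (by positivity)
  have hne : f ≠ 0 := ne_of_gt hf
  have key : w0 φ f x - ((1 - Real.exp (-f)) / f
        + ψ1 x * ((1 - Real.exp (-f)) / f ^ 2)
        + (ψ2 x + ψ1 x ^ 2) * ((1 - Real.exp (-f)) / f ^ 3)) = I3 / f ^ 3 := by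
    rw [hw, E1, E2, E3]
    simp only [add_zero, v00, v01, hp1, hp2, mul_one]
    simp only [sub_self, Real.exp_zero]
    field_simp
    ring
  rw [key, abs_div, abs_of_pos (by positivity : (0:ℝ) < f ^ 3)]
  calc |I3| / f ^ 3 ≤ ((C3 + 3 * C1 * C2 + C1 ^ 3) * Real.exp (2 * C0) / f) / f ^ 3 := by
        exact (div_le_div_iff_of_pos_right (by positivity)).mpr hbound
    _ = (C3 + 3 * C1 * C2 + C1 ^ 3) * Real.exp (2 * C0) / f ^ 4 := by
        rw [div_div, show f * f ^ 3 = f ^ 4 by ring]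

/-- As `f → +∞`, the effective drag coefficient
`ζ(f) = f·M₀(f)/(1 − e^{−f})` satisfies
`ζ(f) = 1 + (1/f²)·∫₀¹ (φ'(x))² dx + O(1/f³)`. -/
theorem stmt_17 (φ : ℝ → ℝ) (hφ : ContDiff ℝ 3 φ) (hφper : ∀ x, φ (x + 1) = φ x)
    (ζ : ℝ → ℝ) (hζ : ∀ f, ζ f = f * M0 φ f / (1 - Real.exp (-f))) :
    (fun f => ζ f - 1 - (1 / f ^ 2) * ∫ x in (0:ℝ)..1, (deriv φ x) ^ 2)
      =O[atTop] (fun f => 1 / f ^ 3) := by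
  obtain ⟨B, hB, hBnd⟩ := L_expand φ hφ hφper
  have hd0 : Differentiable ℝ φ := hφ.differentiable (by norm_num)
  have hφ' : ContDiff ℝ 2 (deriv φ) :=
    (contDiff_succ_iff_deriv.mp (show ContDiff ℝ (2 + 1) φ by exact_mod_cast hφ)).2.2
  have hd1 : Differentiable ℝ (deriv φ) := hφ'.differentiable (by norm_num)
  have hφ'' : ContDiff ℝ 1 (deriv (deriv φ)) :=
    (contDiff_succ_iff_deriv.mp (show ContDiff ℝ (1 + 1) (deriv φ) by exact_mod_cast hφ')).2.2
  have hc1 : Continuous (deriv φ) := hd1.continuous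
  have hc2 : Continuous (deriv (deriv φ)) := hφ''.continuous
  set S := ∫ x in (0:ℝ)..1, (deriv φ x) ^ 2 with hS
  have i1 : ∫ x in (0:ℝ)..1, deriv φ x = 0 := by
    rw [intervalIntegral.integral_deriv_eq_sub (fun x _ => hd0 x) (hc1.intervalIntegrable 0 1)]
    have := hφper 0
    rw [zero_add] at this
    rw [this, sub_self]
  have i2 : ∫ x in (0:ℝ)..1, deriv (deriv φ) x = 0 := by
    rw [intervalIntegral.integral_deriv_eq_sub (fun x _ => hd1 x) (hc2.intervalIntegrable 0 1)]
    have := L_deriv_per hφper 0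
    rw [zero_add] at this
    rw [this, sub_self]
  rw [isBigO_iff]
  refine ⟨2 * B, ?_⟩
  filter_upwards [eventually_ge_atTop (1:ℝ)] with f hf1
  have hf : (0:ℝ) < f := lt_of_lt_of_le one_pos hf1
  have hne : f ≠ 0 := ne_of_gt hf
  set E := 1 - Real.exp (-f) with hE
  have hEpos : 0 < E := by
    have : Real.exp (-f) < 1 := Real.exp_lt_one_iff.mpr (by linarith)
    simp only [hE]; linarith
  have hEhalf : (1:ℝ)/2 ≤ E := by
    have h2 : (2:ℝ) ≤ Real.exp 1 := by
      have := Real.add_one_le_exp 1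
      linarith
    have hm : Real.exp (-f) ≤ Real.exp (-1) := Real.exp_le_exp.mpr (by linarith)
    have : Real.exp (-1) ≤ 1/2 := by
      rw [Real.exp_neg]
      rw [inv_le_comm₀ (Real.exp_pos 1) (by norm_num)] at *
      · linarith
    simp only [hE]; linarith
  set T : ℝ → ℝ := fun x => E / f + deriv φ x * (E / f ^ 2)
    + (deriv (deriv φ) x + (deriv φ x) ^ 2) * (E / f ^ 3) with hT
  have hTcont : Continuous T := by fun_prop
  have hw0cont : Continuous (fun x => w0 φ f x) := L_w0_cont φ hd0.continuous f
  set Rq := ∫ x in (0:ℝ)..1, (w0 φ f x - T x) with hRq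
  have hsplit : M0 φ f = (∫ x in (0:ℝ)..1, T x) + Rq := by
    rw [M0, hRq, ← intervalIntegral.integral_add (f := T) (g := fun x => w0 φ f x - T x)
      (hTcont.intervalIntegrable 0 1)
      ((hw0cont.sub hTcont).intervalIntegrable 0 1)]
    congr 1
    ext x
    ring
  have hTint : (∫ x in (0:ℝ)..1, T x) = E / f + S * (E / f ^ 3) := by
    have e1 : T = fun x => (E / f + (E / f ^ 2) * deriv φ x)
        + (E / f ^ 3) * (deriv (deriv φ) x + (deriv φ x) ^ 2) := by
      funext x
      simp only [hT]
      ring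
    rw [e1]
    rw [intervalIntegral.integral_add (f := fun x => E / f + (E / f ^ 2) * deriv φ x)
      (g := fun x => (E / f ^ 3) * (deriv (deriv φ) x + (deriv φ x) ^ 2))
      ((continuous_const.add (continuous_const.mul hc1)).intervalIntegrable 0 1)
      ((continuous_const.mul (hc2.add (hc1.pow 2))).intervalIntegrable 0 1)]
    rw [intervalIntegral.integral_add (f := fun _ => E / f) (g := fun x => (E / f ^ 2) * deriv φ x)
      (intervalIntegrable_const)
      ((continuous_const.mul hc1).intervalIntegrable 0 1)]
    rw [intervalIntegral.integral_const_mul, intervalIntegral.integral_const_mul]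
    rw [intervalIntegral.integral_add (f := deriv (deriv φ)) (g := fun x => (deriv φ x) ^ 2)
      ((hc2).intervalIntegrable 0 1)
      ((hc1.pow 2).intervalIntegrable 0 1)]
    rw [i1, i2, intervalIntegral.integral_const]
    simp only [smul_eq_mul, sub_zero, mul_one, mul_zero, add_zero, zero_add]
    rw [← hS]
    ring
  have hRbnd : |Rq| ≤ B / f ^ 4 := by
    rw [hRq]
    have h := intervalIntegral.norm_integral_le_of_norm_le_const
      (C := B / f ^ 4) (f := fun x => w0 φ f x - T x) (a := 0) (b := 1) ?_
    · rw [Real.norm_eq_abs] at h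
      simpa using h
    · intro x hx
      rw [Set.uIoc_of_le zero_le_one] at hx
      rw [Real.norm_eq_abs]
      have := hBnd f hf x ⟨hx.1.le, hx.2⟩
      simpa [hT, hE] using this
  have hM0 : M0 φ f = E / f + S * (E / f ^ 3) + Rq := by rw [hsplit, hTint]
  have hkey : ζ f - 1 - (1 / f ^ 2) * S = f * Rq / E := by
    rw [hζ f, hM0, ← hE]
    field_simp
    ring
  rw [hkey, Real.norm_eq_abs, Real.norm_eq_abs]
  rw [abs_div, abs_mul, abs_of_pos hf, abs_of_pos hEpos]
  have habs3 : |1 / f ^ 3| = 1 / f ^ 3 := abs_of_pos (by positivity)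
  rw [habs3]
  calc f * |Rq| / E ≤ f * (B / f ^ 4) / E := by gcongr
    _ ≤ f * (B / f ^ 4) / (1/2) := by gcongr
    _ = 2 * B * (1 / f ^ 3) := by field_simp
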